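/- Let n ≥ 1, let θ : {0,…,2n−1} → [0, 2π) be strictly increasing, and let p(i) = (cos θ(i), sin θ(i)) ∈ ℝ² be the corresponding points on the unit circle. Let σ be a fixed-point-free involution of {0,…,2n−1} such that the perfect matching pairing p(i) with p(σ(i)) is non-crossing: for every i and every j ∉ {i, σ(i)}, the closed segments [p(i), p(σ(i))] and [p(j), p(σ(j))] are disjoint. Then every matched pair has opposite parities: for all i, the number i + σ(i) is odd. -/

import Mathlib

lemma cross_chord (α β φ : ℝ) :
    (Real.cos β - Real.cos α) * (Real.sin φ - Real.sin α)
      - (Real.sin β - Real.sin α) * (Real.cos φ - Real.cos α)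
    = 4 * Real.sin ((β - α)/2) * Real.sin ((φ - α)/2) * Real.sin ((φ - β)/2) := by
  have h5 : (φ - β)/2 = (φ + α)/2 - (β + α)/2 := by ring
  rw [Real.cos_sub_cos β α, Real.sin_sub_sin φ α, Real.sin_sub_sin β α,
    Real.cos_sub_cos φ α, h5, Real.sin_sub]
  ring

lemma even_card_of_invol {α : Type*} [DecidableEq α] :
    ∀ (s : Finset α) (f : α → α), (∀ a ∈ s, f a ∈ s) → (∀ a ∈ s, f (f a) = a) →
      (∀ a ∈ s, f a ≠ a) → Even s.card := by
  intro s
  induction s using Finset.strongInduction with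
  | _ s ih =>
    intro f hmem hinv hne
    rcases s.eq_empty_or_nonempty with rfl | ⟨a, ha⟩
    · simp
    · have hfa := hmem a ha
      have hne' := hne a ha
      have hsub : {a, f a} ⊆ s := by
        intro x hx
        rcases Finset.mem_insert.1 hx with rfl | hx
        · exact ha
        · rcases Finset.mem_singleton.1 hx with rfl; exact hfa
      have hts : s \ {a, f a} ⊂ s :=
        Finset.sdiff_ssubset hsub ⟨a, Finset.mem_insert_self _ _⟩
      have hEt : Even (s \ {a, f a}).card := by
        apply ih _ hts f
        · intro b hb
          obtain ⟨hbs, hbn⟩ := Finset.mem_sdiff.1 hb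
          simp only [Finset.mem_insert, Finset.mem_singleton, not_or] at hbn
          refine Finset.mem_sdiff.2 ⟨hmem b hbs, ?_⟩
          simp only [Finset.mem_insert, Finset.mem_singleton, not_or]
          constructor
          · intro h; exact hbn.2 (by rw [← h, hinv b hbs])
          · intro h
            have : f (f b) = f (f a) := by rw [h]
            rw [hinv b hbs, hinv a ha] at this
            exact hbn.1 this
        · intro b hb; exact hinv b (Finset.mem_sdiff.1 hb).1
        · intro b hb; exact hne b (Finset.mem_sdiff.1 hb).1
      have hcard2 : ({a, f a} : Finset α).card = 2 := by
        rw [Finset.card_insert_of_notMem (by simp [Ne.symm hne']), Finset.card_singleton]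
      have := Finset.card_sdiff_of_subset hsub
      have hle := Finset.card_le_card hsub
      obtain ⟨k, hk⟩ := hEt
      exact ⟨k + 1, by omega⟩

lemma seg_meet (a0 a1 b0 b1 u0 u1 v0 v1 : ℝ)
    (hna : a0 ^ 2 + a1 ^ 2 = 1) (hnb : b0 ^ 2 + b1 ^ 2 = 1)
    (hnu : u0 ^ 2 + u1 ^ 2 = 1) (hnv : v0 ^ 2 + v1 ^ 2 = 1)
    (hab : 0 < (b0 - a0) ^ 2 + (b1 - a1) ^ 2)
    (hu : (b0 - a0) * (u1 - a1) - (b1 - a1) * (u0 - a0) < 0)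
    (hv : 0 < (b0 - a0) * (v1 - a1) - (b1 - a1) * (v0 - a0)) :
    ∃ t c : ℝ, 0 ≤ t ∧ t ≤ 1 ∧ 0 ≤ c ∧ c ≤ 1 ∧
      (1 - t) * u0 + t * v0 = (1 - c) * a0 + c * b0 ∧
      (1 - t) * u1 + t * v1 = (1 - c) * a1 + c * b1 := by
  obtain ⟨su, hsu⟩ : ∃ s, s = (b0 - a0) * (u1 - a1) - (b1 - a1) * (u0 - a0) := ⟨_, rfl⟩
  obtain ⟨sv, hsv⟩ : ∃ s, s = (b0 - a0) * (v1 - a1) - (b1 - a1) * (v0 - a0) := ⟨_, rfl⟩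
  rw [← hsu] at hu; rw [← hsv] at hv
  obtain ⟨t, hts⟩ : ∃ t : ℝ, t = -su / (sv - su) := ⟨_, rfl⟩
  have hsvsu : 0 < sv - su := by linarith
  have ht0 : 0 < t := hts ▸ div_pos (by linarith) hsvsu
  have ht1 : t < 1 := by rw [hts, div_lt_one hsvsu]; linarith
  obtain ⟨x0, hx0⟩ : ∃ x : ℝ, x = (1 - t) * u0 + t * v0 := ⟨_, rfl⟩
  obtain ⟨x1, hx1⟩ : ∃ x : ℝ, x = (1 - t) * u1 + t * v1 := ⟨_, rfl⟩
  have hline : (b0 - a0) * (x1 - a1) - (b1 - a1) * (x0 - a0) = 0 := by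
    have h : (b0 - a0) * (x1 - a1) - (b1 - a1) * (x0 - a0) = (1 - t) * su + t * sv := by
      rw [hx0, hx1, hsu, hsv]; ring
    rw [h, hts]; field_simp; ring
  obtain ⟨c, hc⟩ : ∃ c : ℝ, c = ((x0 - a0) * (b0 - a0) + (x1 - a1) * (b1 - a1)) /
      ((b0 - a0) ^ 2 + (b1 - a1) ^ 2) := ⟨_, rfl⟩
  have hD : ((b0 - a0) ^ 2 + (b1 - a1) ^ 2) ≠ 0 := ne_of_gt hab
  have hcx0 : x0 - a0 = c * (b0 - a0) := by
    rw [hc]; field_simp; linear_combination (-(b1 - a1)) * hline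
  have hcx1 : x1 - a1 = c * (b1 - a1) := by
    rw [hc]; field_simp; linear_combination (b0 - a0) * hline
  have hxnorm : x0 ^ 2 + x1 ^ 2 ≤ 1 := by
    have htt : 0 ≤ t * (1 - t) := mul_nonneg (le_of_lt ht0) (by linarith)
    have hid : x0 ^ 2 + x1 ^ 2 = 1 - t * (1 - t) * ((u0 - v0) ^ 2 + (u1 - v1) ^ 2) := by
      rw [hx0, hx1]; linear_combination (1 - t) * hnu + t * hnv
    have hge := mul_nonneg htt (add_nonneg (sq_nonneg (u0 - v0)) (sq_nonneg (u1 - v1)))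
    linarith
  have hkey : x0 ^ 2 + x1 ^ 2 = 1 - c * (1 - c) * ((b0 - a0) ^ 2 + (b1 - a1) ^ 2) := by
    have e0 : x0 = (1 - c) * a0 + c * b0 := by linarith [hcx0]
    have e1 : x1 = (1 - c) * a1 + c * b1 := by linarith [hcx1]
    rw [e0, e1]; linear_combination (1 - c) * hna + c * hnb
  have hcc : 0 ≤ c * (1 - c) := by
    have h2 : 0 ≤ ((b0 - a0) ^ 2 + (b1 - a1) ^ 2) * (c * (1 - c)) := by
      rw [mul_comm]; linarith
    exact nonneg_of_mul_nonneg_right h2 hab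
  have hc0 : 0 ≤ c := by
    by_contra h
    push_neg at h
    have : c * (1 - c) < 0 := mul_neg_of_neg_of_pos h (by linarith)
    linarith
  have hc1 : c ≤ 1 := by
    by_contra h
    push_neg at h
    have : c * (1 - c) < 0 := mul_neg_of_pos_of_neg (by linarith) (by linarith)
    linarith
  exact ⟨t, c, le_of_lt ht0, le_of_lt ht1, hc0, hc1,
    by rw [← hx0]; linarith [hcx0], by rw [← hx1]; linarith [hcx1]⟩

lemma chords_not_disjoint (a b u v : EuclideanSpace ℝ (Fin 2))
    (hna : a 0 ^ 2 + a 1 ^ 2 = 1) (hnb : b 0 ^ 2 + b 1 ^ 2 = 1)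
    (hnu : u 0 ^ 2 + u 1 ^ 2 = 1) (hnv : v 0 ^ 2 + v 1 ^ 2 = 1)
    (hab : 0 < (b 0 - a 0) ^ 2 + (b 1 - a 1) ^ 2)
    (hu : (b 0 - a 0) * (u 1 - a 1) - (b 1 - a 1) * (u 0 - a 0) < 0)
    (hv : 0 < (b 0 - a 0) * (v 1 - a 1) - (b 1 - a 1) * (v 0 - a 0)) :
    ¬ Disjoint (segment ℝ a b) (segment ℝ u v) := by
  obtain ⟨t, c, ht0, ht1, hc0, hc1, he0, he1⟩ :=
    seg_meet (a 0) (a 1) (b 0) (b 1) (u 0) (u 1) (v 0) (v 1) hna hnb hnu hnv hab hu hv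
  have hxy : (1 - t) • u + t • v = (1 - c) • a + c • b := by
    ext i
    fin_cases i <;>
      simpa only [PiLp.add_apply, PiLp.smul_apply, smul_eq_mul] using (by assumption)
  intro hd
  have h1 : (1 - c) • a + c • b ∈ segment ℝ a b := ⟨1 - c, c, by linarith, hc0, by ring, rfl⟩
  have h2 : (1 - c) • a + c • b ∈ segment ℝ u v := by
    rw [← hxy]; exact ⟨1 - t, t, by linarith, ht0, by ring, rfl⟩
  exact Set.disjoint_left.1 hd h1 h2


/-- For `2n` points on the unit circle listed in strictly increasing angular order in
`[0, 2π)`, any perfect non-crossing matching (fixed-point-free involution with pairwise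
disjoint chords) matches points of opposite parities: `i + σ i` is odd for all `i`. -/
theorem circle_noncrossing_matching_opposite_parity (n : ℕ) (hn : 1 ≤ n)
    (θ : Fin (2 * n) → ℝ) (hθmono : StrictMono θ)
    (hθrange : ∀ i, 0 ≤ θ i ∧ θ i < 2 * Real.pi)
    (p : Fin (2 * n) → EuclideanSpace ℝ (Fin 2))
    (hp : ∀ i, p i = (WithLp.equiv 2 (Fin 2 → ℝ)).symm ![Real.cos (θ i), Real.sin (θ i)])
    (σ : Equiv.Perm (Fin (2 * n)))
    (hinv : Function.Involutive σ) (hfpf : ∀ i, σ i ≠ i)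
    (hnc : ∀ i j : Fin (2 * n), j ≠ i → j ≠ σ i →
      Disjoint (segment ℝ (p i) (p (σ i))) (segment ℝ (p j) (p (σ j)))) :
    ∀ i : Fin (2 * n), Odd (i.val + (σ i).val) := by
  have hp0 : ∀ i, p i 0 = Real.cos (θ i) := by intro i; rw [hp i]; simp
  have hp1 : ∀ i, p i 1 = Real.sin (θ i) := by intro i; rw [hp i]; simp
  have hnorm : ∀ i, p i 0 ^ 2 + p i 1 ^ 2 = 1 := by
    intro i; rw [hp0, hp1]; exact Real.cos_sq_add_sin_sq (θ i)
  have pi_pos := Real.pi_pos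
  have sinpos : ∀ x y : ℝ, 0 ≤ x → y < 2 * Real.pi → x < y → 0 < Real.sin ((y - x) / 2) := by
    intro x y h1 h2 h3
    exact Real.sin_pos_of_pos_of_lt_pi (by linarith) (by linarith)
  have sinneg : ∀ x y : ℝ, 0 ≤ x → y < 2 * Real.pi → x < y → Real.sin ((x - y) / 2) < 0 := by
    intro x y h1 h2 h3
    exact Real.sin_neg_of_neg_of_neg_pi_lt (by linarith) (by linarith)
  suffices h : ∀ i : Fin (2 * n), i < σ i → Odd (i.val + (σ i).val) by
    intro i
    rcases lt_or_gt_of_ne (Ne.symm (hfpf i)) with hlt | hgt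
    · exact h i hlt
    · have h2 := h (σ i) (by rw [hinv i]; exact hgt)
      rw [hinv i] at h2
      rwa [Nat.add_comm] at h2
  intro i hlt
  have crossval : ∀ j : Fin (2 * n),
      (p (σ i) 0 - p i 0) * (p j 1 - p i 1) - (p (σ i) 1 - p i 1) * (p j 0 - p i 0)
      = 4 * Real.sin ((θ (σ i) - θ i) / 2) * Real.sin ((θ j - θ i) / 2)
        * Real.sin ((θ j - θ (σ i)) / 2) := by
    intro j
    rw [hp0, hp0, hp0, hp1, hp1, hp1]
    exact cross_chord (θ i) (θ (σ i)) (θ j)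
  obtain ⟨hθi0, hθi1⟩ := hθrange i
  obtain ⟨hθs0, hθs1⟩ := hθrange (σ i)
  have hba : θ i < θ (σ i) := hθmono hlt
  have s1pos : 0 < Real.sin ((θ (σ i) - θ i) / 2) := sinpos _ _ hθi0 hθs1 hba
  have pos4 : 0 < 4 * Real.sin ((θ (σ i) - θ i) / 2) := by linarith
  have hab : 0 < (p (σ i) 0 - p i 0) ^ 2 + (p (σ i) 1 - p i 1) ^ 2 := by
    rw [hp0, hp0, hp1, hp1]
    have hcs : Real.cos (θ (σ i) - θ i)
        = 1 - 2 * Real.sin ((θ (σ i) - θ i) / 2) ^ 2 := by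
      have h2 : θ (σ i) - θ i = 2 * ((θ (σ i) - θ i) / 2) := by ring
      rw [h2, Real.cos_two_mul, ← Real.sin_sq_add_cos_sq ((θ (σ i) - θ i) / 2)]
      ring
    have hexp : (Real.cos (θ (σ i)) - Real.cos (θ i)) ^ 2
        + (Real.sin (θ (σ i)) - Real.sin (θ i)) ^ 2
        = 2 - 2 * Real.cos (θ (σ i) - θ i) := by
      rw [Real.cos_sub]
      linear_combination Real.sin_sq_add_cos_sq (θ (σ i)) + Real.sin_sq_add_cos_sq (θ i)
    rw [hexp, hcs]
    nlinarith [s1pos]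
  have hmap : ∀ j ∈ Finset.Ioo i (σ i), σ j ∈ Finset.Ioo i (σ i) := by
    intro j hj
    rw [Finset.mem_Ioo] at hj ⊢
    obtain ⟨h1, h2⟩ := hj
    by_contra hout
    have hji : j ≠ i := ne_of_gt h1
    have hjsi : j ≠ σ i := ne_of_lt h2
    have hsji : σ j ≠ i := by
      intro h
      apply hjsi
      have := congrArg σ h
      rwa [hinv j] at this
    have hsjsi : σ j ≠ σ i := fun h => hji (σ.injective h)
    obtain ⟨hθj0, hθj1⟩ := hθrange j
    obtain ⟨hθk0, hθk1⟩ := hθrange (σ j)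
    have hθji : θ i < θ j := hθmono h1
    have hθjs : θ j < θ (σ i) := hθmono h2
    have hsu : (p (σ i) 0 - p i 0) * (p j 1 - p i 1)
        - (p (σ i) 1 - p i 1) * (p j 0 - p i 0) < 0 := by
      rw [crossval j]
      exact mul_neg_of_pos_of_neg (mul_pos pos4 (sinpos _ _ hθi0 hθj1 hθji))
        (sinneg _ _ hθj0 hθs1 hθjs)
    have hcase : σ j < i ∨ σ i < σ j := by
      rcases lt_trichotomy (σ j) i with h | h | h
      · exact Or.inl h
      · exact absurd h hsji
      · rcases lt_trichotomy (σ j) (σ i) with h' | h' | h'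
        · exact absurd ⟨h, h'⟩ hout
        · exact absurd h' hsjsi
        · exact Or.inr h'
    have hsv : 0 < (p (σ i) 0 - p i 0) * (p (σ j) 1 - p i 1)
        - (p (σ i) 1 - p i 1) * (p (σ j) 0 - p i 0) := by
      rw [crossval (σ j)]
      rcases hcase with h | h
      · have hθksi : θ (σ j) < θ i := hθmono h
        exact mul_pos_of_neg_of_neg
          (mul_neg_of_pos_of_neg pos4 (sinneg _ _ hθk0 hθi1 hθksi))
          (sinneg _ _ hθk0 hθs1 (lt_trans hθksi hba))
      · have hθksi : θ (σ i) < θ (σ j) := hθmono h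
        exact mul_pos (mul_pos pos4 (sinpos _ _ hθi0 hθk1 (lt_trans hba hθksi)))
          (sinpos _ _ hθs0 hθk1 hθksi)
    exact chords_not_disjoint (p i) (p (σ i)) (p j) (p (σ j))
      (hnorm i) (hnorm (σ i)) (hnorm j) (hnorm (σ j)) hab hsu hsv
      (hnc i j hji hjsi)
  have heven : Even (Finset.Ioo i (σ i)).card :=
    even_card_of_invol _ σ hmap (fun a _ => hinv a) (fun a _ => hfpf a)
  rw [Fin.card_Ioo] at heven
  obtain ⟨k, hk⟩ := heven
  have hvlt : i.val < (σ i).val := hlt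
  exact ⟨i.val + k, by omega⟩
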